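/- arXiv:1807.07022 — 4 statements merged into one kernel-verified Lean document; each statement's English description precedes it below -/
import Mathlib

section
/- Soundness of the Emp rule: for every n ∈ ℕ and every function dictionary Δ, if the set EV(Γ, {φ; emp}, {ψ; emp}) of existentials of the goal is empty and the pure implication φ ⇒ ψ is valid, then the specification Σ; Γ; {φ; emp} skip {ψ; emp} is n-valid w.r.t. Δ. -/
set_option maxHeartbeats 1000000

namespace SSL

/-! ## Basic syntax: variables, values, locations -/

abbrev Var := String
abbrev Val := Int
abbrev Loc := ℕ

/-- Expressions of the programming language (also used as pure formulae). -/
inductive Expr : Type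
  | lit : Val → Expr
  | var : Var → Expr
  | add : Expr → Expr → Expr
  | eq : Expr → Expr → Expr
  | and : Expr → Expr → Expr
  | not : Expr → Expr
  deriving DecidableEq

/-- Stores: finite maps from program variables to values. -/
abbrev Store := Finmap (fun _ : Var => Val)
/-- Heaps: finite partial maps from locations to values. -/
abbrev Heap := Finmap (fun _ : Loc => Val)

/-- Valuation of an expression under a store. -/
def Expr.eval : Expr → Store → Option Val
  | .lit v, _ => some v
  | .var x, s => s.lookup x
  | .add e₁ e₂, s => do pure ((← e₁.eval s) + (← e₂.eval s))
  | .eq e₁ e₂, s => do pure (if (← e₁.eval s) = (← e₂.eval s) then (1 : Val) else 0)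
  | .and e₁ e₂, s => do
      pure (if ((← e₁.eval s) = (1 : Val) ∧ (← e₂.eval s) = (1 : Val)) then (1 : Val) else 0)
  | .not e, s => do pure (if (← e.eval s) = (1 : Val) then (0 : Val) else 1)

/-- A (boolean) expression is true under a store. -/
def Expr.holds (e : Expr) (s : Store) : Prop := e.eval s = some 1

/-- Validity of the pure implication φ ⇒ ψ. -/
def PImplies (φ ψ : Expr) : Prop := ∀ s : Store, φ.holds s → ψ.holds s

def Expr.vars : Expr → Finset Var
  | .lit _ => ∅
  | .var x => {x}
  | .add e₁ e₂ => e₁.vars ∪ e₂.vars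
  | .eq e₁ e₂ => e₁.vars ∪ e₂.vars
  | .and e₁ e₂ => e₁.vars ∪ e₂.vars
  | .not e => e.vars

/-! ## Substitutions -/

abbrev Subst := Var → Option Expr

def Subst.single (x : Var) (e : Expr) : Subst := fun z => if z = x then some e else none

def Subst.ofList (l : List (Var × Expr)) : Subst := fun x => l.lookup x

/-- Union of substitutions (left-biased). -/
def Subst.union (σ₁ σ₂ : Subst) : Subst := fun x => (σ₁ x).orElse (fun _ => σ₂ x)

def Subst.domain (σ : Subst) : Set Var := {x | (σ x).isSome}

/-- σ is a substitution of values (literals) for exactly the variables in `d`. -/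
def IsValSubst (σ : Subst) (d : Finset Var) : Prop :=
  (∀ x, x ∈ d ↔ (σ x).isSome) ∧ (∀ x e, σ x = some e → ∃ v : Val, e = .lit v)

def Expr.subst (σ : Subst) : Expr → Expr
  | .lit v => .lit v
  | .var x => (σ x).getD (.var x)
  | .add e₁ e₂ => .add (e₁.subst σ) (e₂.subst σ)
  | .eq e₁ e₂ => .eq (e₁.subst σ) (e₂.subst σ)
  | .and e₁ e₂ => .and (e₁.subst σ) (e₂.subst σ)
  | .not e => .not (e.subst σ)

/-! ## Spatial formulae and assertions -/

/-- Spatial formulae; predicate instances carry an optional level tag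
    (`none` means the tag has been erased). -/
inductive Spatial : Type
  | emp : Spatial
  | pts : Expr → ℕ → Expr → Spatial   -- ⟨e₁, ι⟩ ↦ e₂
  | blk : Expr → ℕ → Spatial           -- [e, m]
  | pred : String → Option ℕ → List Expr → Spatial  -- p^ℓ(ē)
  | star : Spatial → Spatial → Spatial
  deriving DecidableEq

def Spatial.vars : Spatial → Finset Var
  | .emp => ∅
  | .pts e₁ _ e₂ => e₁.vars ∪ e₂.vars
  | .blk e _ => e.vars
  | .pred _ _ args => args.foldr (fun e acc => e.vars ∪ acc) ∅
  | .star P Q => P.vars ∪ Q.vars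

def Spatial.subst (σ : Subst) : Spatial → Spatial
  | .emp => .emp
  | .pts e₁ ι e₂ => .pts (e₁.subst σ) ι (e₂.subst σ)
  | .blk e m => .blk (e.subst σ) m
  | .pred p t args => .pred p t (args.map (Expr.subst σ))
  | .star P Q => .star (P.subst σ) (Q.subst σ)

def Spatial.setTags (t : Option ℕ) : Spatial → Spatial
  | .pred p _ args => .pred p t args
  | .star P Q => .star (P.setTags t) (Q.setTags t)
  | s => s

/-- ⌊P⌋: erase all level tags. -/
def Spatial.eraseTags (s : Spatial) : Spatial := s.setTags none

/-- P mentions no level tags. -/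
def Spatial.TagFree (s : Spatial) : Prop := s.eraseTags = s

def Spatial.hasPred : Spatial → Prop
  | .pred _ _ _ => True
  | .star P Q => P.hasPred ∨ Q.hasPred
  | _ => False

def Spatial.hasPts : Spatial → Prop
  | .pts _ _ _ => True
  | .star P Q => P.hasPts ∨ Q.hasPts
  | _ => False

/-- Assertions {φ; P}: a pure part and a spatial part. -/
structure Assn where
  pure : Expr
  spat : Spatial

def Assn.vars (A : Assn) : Finset Var := A.pure.vars ∪ A.spat.vars
def Assn.subst (A : Assn) (σ : Subst) : Assn := ⟨A.pure.subst σ, A.spat.subst σ⟩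
def Assn.eraseTags (A : Assn) : Assn := ⟨A.pure, A.spat.eraseTags⟩

/-- Ghosts: GV(Γ, P, Q) = Vars(P) ∖ Γ. -/
def GV (Γ : Finset Var) (P _Q : Assn) : Finset Var := P.vars \ Γ
/-- Existentials: EV(Γ, P, Q) = Vars(Q) ∖ (Γ ∪ Vars(P)). -/
def EV (Γ : Finset Var) (P Q : Assn) : Finset Var := Q.vars \ (Γ ∪ P.vars)

/-! ## Satisfaction -/

/-- Interpretations of inductive heap predicates. -/
abbrev Interp := String → Heap → List Val → Prop

def evalList (es : List Expr) (s : Store) : Option (List Val) := es.mapM (Expr.eval · s)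

/-- Satisfaction of a spatial formula. Blocks have no spatial footprint;
    points-to heaplets are singleton heaps at a non-null base address. -/
def SatS (I : Interp) : Heap → Store → Spatial → Prop
  | h, _, .emp => h = ∅
  | h, s, .pts e₁ ι e₂ =>
      ∃ (l : Loc) (v : Val), 0 < l ∧ e₁.eval s = some (l : Val) ∧ e₂.eval s = some v ∧
        h = Finmap.singleton (l + ι) v
  | h, _, .blk _ _ => h = ∅
  | h, s, .pred p _ args => ∃ vs, evalList args s = some vs ∧ I p h vs
  | h, s, .star P Q => ∃ h₁ h₂, h₁.Disjoint h₂ ∧ h = h₁ ∪ h₂ ∧ SatS I h₁ s P ∧ SatS I h₂ s Q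

/-- Satisfaction ⟨h, s⟩ ⊨ {φ; P}. -/
def Sat (I : Interp) (h : Heap) (s : Store) (A : Assn) : Prop :=
  A.pure.holds s ∧ SatS I h s A.spat

/-! ## Programs and small-step operational semantics -/

inductive Cmd : Type
  | read : Var → Var → ℕ → Cmd       -- let y = *(x + ι)
  | write : Var → ℕ → Expr → Cmd     -- *(x + ι) := e
  | skip : Cmd
  | error : Cmd
  | ite : Expr → Cmd → Cmd → Cmd
  | call : String → List Expr → Cmd
  | seq : Cmd → Cmd → Cmd
  | malloc : Var → ℕ → Cmd           -- let y = malloc(m)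
  | free : Var → ℕ → Cmd             -- free(x), block of m cells
  deriving DecidableEq

structure FunDef where
  name : String
  params : List Var
  body : Cmd

abbrev FunDict := List FunDef

def FunDict.find (Δ : FunDict) (f : String) : Option FunDef := Δ.find? (fun fd => fd.name == f)

def bindStore (xs : List Var) (vs : List Val) : Store :=
  (xs.zip vs).foldr (fun p acc => acc.insert p.1 p.2) ∅

abbrev Frame := Cmd × Store
abbrev Config := Heap × List Frame

def allocCells (l : Loc) : List Val → Heap → Heap
  | [], h => h
  | v :: vs, h => (allocCells (l + 1) vs h).insert l v

def freeCells (l : Loc) : ℕ → Heap → Heap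
  | 0, h => h
  | m + 1, h => (freeCells (l + 1) m h).erase l

/-- Local (single-frame, non-call) steps of atomic commands. -/
inductive HStep : Heap → Cmd → Store → Heap → Cmd → Store → Prop
  | read {h s y x ι} {l : Loc} {v : Val} :
      s.lookup x = some (l : Val) → h.lookup (l + ι) = some v →
      HStep h (.read y x ι) s h .skip (s.insert y v)
  | write {h s x ι e} {l : Loc} {v v' : Val} :
      s.lookup x = some (l : Val) → h.lookup (l + ι) = some v' → e.eval s = some v →
      HStep h (.write x ι e) s (h.insert (l + ι) v) .skip s
  | malloc {h s y m} {l : Loc} {vs : List Val} :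
      0 < l → vs.length = m → (∀ i < m, (l + i) ∉ h) →
      HStep h (.malloc y m) s (allocCells l vs h) .skip (s.insert y (l : Val))
  | free {h s x m} {l : Loc} :
      s.lookup x = some (l : Val) → (∀ i < m, (l + i) ∈ h) →
      HStep h (.free x m) s (freeCells l m h) .skip s
  | iteTrue {h s e c₁ c₂} : e.holds s → HStep h (.ite e c₁ c₂) s h c₁ s
  | iteFalse {h s e c₁ c₂} {v : Val} : e.eval s = some v → v ≠ 1 →
      HStep h (.ite e c₁ c₂) s h c₂ s

/-- Small-step operational semantics on configurations (heap + stack of frames). -/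
inductive Step (Δ : FunDict) : Config → Config → Prop
  | head {h c s h' c' s' S} : HStep h c s h' c' s' →
      Step Δ (h, (c, s) :: S) (h', (c', s') :: S)
  | seqStep {h c₁ s h' c₁' s' c₂ S} : Step Δ (h, (c₁, s) :: S) (h', (c₁', s') :: S) →
      Step Δ (h, (.seq c₁ c₂, s) :: S) (h', (.seq c₁' c₂, s') :: S)
  | seqSkip {h c s S} : Step Δ (h, (.seq .skip c, s) :: S) (h, (c, s) :: S)
  | call {h s S f args vs fd} : Δ.find f = some fd → evalList args s = some vs →
      Step Δ (h, (.call f args, s) :: S)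
             (h, (fd.body, bindStore fd.params vs) :: (.skip, s) :: S)
  | callSeq {h s S f args vs fd c₂} : Δ.find f = some fd → evalList args s = some vs →
      Step Δ (h, (.seq (.call f args) c₂, s) :: S)
             (h, (fd.body, bindStore fd.params vs) :: (c₂, s) :: S)
  | ret {h s' c s S} : Step Δ (h, (.skip, s') :: (c, s) :: S) (h, (c, s) :: S)

/-- Δ ⊢ cfg ⇝* cfg' -/
def Steps (Δ : FunDict) : Config → Config → Prop := Relation.ReflTransGen (Step Δ)

/-- |h| -/
def heapSize (h : Heap) : ℕ := h.keys.card

/-- Every execution trace from `cfg` is finite. -/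
def Terminates (Δ : FunDict) (cfg : Config) : Prop :=
  ¬ ∃ ρ : ℕ → Config, ρ 0 = cfg ∧ ∀ i, Step Δ (ρ i) (ρ (i + 1))

/-! ## Sized validity -/

/-- Sized validity: Σ; Γ; {P} c {Q} is n-valid w.r.t. Δ. -/
def Valid (I : Interp) (Δ : FunDict) (Γ : Finset Var) (P : Assn) (c : Cmd) (Q : Assn)
    (n : ℕ) : Prop :=
  ∀ (h h' : Heap) (s s' : Store),
    heapSize h ≤ n →
    Steps Δ (h, [(c, s)]) (h', [(.skip, s')]) →
    s.keys = Γ →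
    ∀ σgv : Subst, IsValSubst σgv (GV Γ P Q) → Sat I h s (P.subst σgv) →
      ∃ σev : Subst, IsValSubst σev (EV Γ P Q) ∧ Sat I h' s' (Q.subst (σev.union σgv))

/-! ## Contexts: inductive predicates and function specifications -/

structure PredClause where
  guard : Expr
  pure : Expr
  spat : Spatial

structure PredDef where
  name : String
  params : List Var
  clauses : List PredClause

/-- A well-founded inductive predicate: every clause containing a recursive
    predicate instance also contains at least one points-to heaplet. -/
def PredDef.WF (D : PredDef) : Prop :=
  ∀ cl ∈ D.clauses, cl.spat.hasPred → cl.spat.hasPts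

structure FunSpec where
  name : String
  params : List Var
  pre : Assn
  post : Assn

structure Ctx where
  preds : List PredDef
  funs : List FunSpec

/-- The guard of a clause, instantiated by σ, is true (under every store). -/
def ClauseGuardTrue (σ : Subst) (cl : PredClause) : Prop :=
  ∀ s : Store, (cl.guard.subst σ).holds s

/-- The body of a clause, instantiated by σ, is satisfied by `h` under some
    valuation (store) of the clause's free variables. -/
def ClauseBodySat (I : Interp) (σ : Subst) (cl : PredClause) (h : Heap) : Prop :=
  ∃ s : Store, Sat I h s ⟨cl.pure.subst σ, cl.spat.subst σ⟩

/-- Substitution of the given values for the formal parameters of `D`. -/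
def valSubstOf (D : PredDef) (vs : List Val) : Subst :=
  Subst.ofList (D.params.zip (vs.map Expr.lit))

/-- `I` interprets `D` by selecting the *first* clause whose guard holds. -/
def UnfoldsFirst (I : Interp) (D : PredDef) : Prop :=
  ∀ (h : Heap) (vs : List Val),
    I D.name h vs ↔
      (vs.length = D.params.length ∧
       ∃ j : Fin D.clauses.length,
         (∀ i : Fin D.clauses.length, (i : ℕ) < (j : ℕ) →
            ¬ ClauseGuardTrue (valSubstOf D vs) (D.clauses.get i)) ∧
         ClauseGuardTrue (valSubstOf D vs) (D.clauses.get j) ∧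
         ClauseBodySat I (valSubstOf D vs) (D.clauses.get j) h)

/-- `I` interprets `D` via *some* clause whose guard holds. -/
def UnfoldsSome (I : Interp) (D : PredDef) : Prop :=
  ∀ (h : Heap) (vs : List Val),
    I D.name h vs ↔
      (vs.length = D.params.length ∧
       ∃ j : Fin D.clauses.length,
         ClauseGuardTrue (valSubstOf D vs) (D.clauses.get j) ∧
         ClauseBodySat I (valSubstOf D vs) (D.clauses.get j) h)

/-! ## Coherence of a function dictionary with a list of function specifications -/

inductive Coherent (I : Interp) (n : ℕ) : FunDict → List FunSpec → Prop
  | nil : Coherent I n [] []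
  | aux {Δ Φ fd fs} : Coherent I n Δ Φ →
      fd.name = fs.name → fd.params = fs.params →
      Valid I Δ fs.params.toFinset fs.pre fd.body fs.post n →
      Coherent I n (fd :: Δ) (fs :: Φ)
  | recC {Δ Φ fd fs} {φ : Expr} {P' : Spatial} {p : String} {es : List Expr} :
      Coherent I n Δ Φ →
      fd.name = fs.name → fd.params = fs.params →
      fs.pre = ⟨φ, .star P' (.pred p (some 1) es)⟩ →
      P'.TagFree → fs.post.spat.TagFree →
      (∀ n' < n, Valid I (fd :: Δ) fs.params.toFinset fs.pre fd.body fs.post n') →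
      Coherent I n (fd :: Δ) (fs :: Φ)

/-- `fd`/`fs` occur in Δ/Φ as an auxiliary function covered by clause (b)
    of the coherence definition. -/
def AuxCovered (I : Interp) (n : ℕ) (Δ : FunDict) (Φ : List FunSpec)
    (fd : FunDef) (fs : FunSpec) : Prop :=
  ∃ Δ₁ Δ₂ Φ₁ Φ₂, Δ = Δ₁ ++ fd :: Δ₂ ∧ Φ = Φ₁ ++ fs :: Φ₂ ∧
    fd.name = fs.name ∧ fd.params = fs.params ∧
    Valid I Δ₂ fs.params.toFinset fs.pre fd.body fs.post n

/-- `fd`/`fs` occur in Δ/Φ as the recursive function covered by clause (c)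
    of the coherence definition. -/
def RecCovered (I : Interp) (n : ℕ) (Δ : FunDict) (Φ : List FunSpec)
    (fd : FunDef) (fs : FunSpec) : Prop :=
  ∃ (Δ₂ : FunDict) (Φ₂ : List FunSpec) (φ : Expr) (P' : Spatial) (p : String) (es : List Expr),
    Δ = fd :: Δ₂ ∧ Φ = fs :: Φ₂ ∧
    fd.name = fs.name ∧ fd.params = fs.params ∧
    fs.pre = ⟨φ, .star P' (.pred p (some 1) es)⟩ ∧ P'.TagFree ∧ fs.post.spat.TagFree ∧
    (∀ n' < n, Valid I Δ fs.params.toFinset fs.pre fd.body fs.post n')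

/-! ## The SSL transforming-entailment judgment -/

/-- ⊛_{0 ≤ i < |es|} ⟨x, i⟩ ↦ esᵢ -/
def ptsRange (x : Var) (es : List Expr) : Spatial :=
  (es.zipIdx.map Prod.swap).foldr (fun p acc => .star (.pts (.var x) p.1 p.2) acc) .emp

/-- Nested conditional: if (g₁) {c₁} else {if (g₂) {c₂} … else {c_N}}. -/
def iteChain : List Expr → List Cmd → Cmd
  | _, [] => .skip
  | _, [c] => c
  | g :: gs, c :: cs => .ite g c (iteChain gs cs)
  | [], c :: _ => c

/-- The SSL judgment Σ; Γ ⊢ {P} ⇝ {Q} | c, inductively generated by the SSL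
    rules (Emp, Inconsistency, SubstLeft, NullNotLVal, StarPartial, Read, Write,
    Frame, Alloc, Free, Open, Close, Call, AbduceCall, UnifyHeaps, UnifyPure,
    Pick, SubstRight). -/
inductive Deriv (maxUnfold : ℕ) : Ctx → Finset Var → Assn → Assn → Cmd → Prop
  | emp {Sg : Ctx} {Γ : Finset Var} {φ ψ : Expr} :
      EV Γ ⟨φ, .emp⟩ ⟨ψ, .emp⟩ = ∅ → PImplies φ ψ →
      Deriv maxUnfold Sg Γ ⟨φ, .emp⟩ ⟨ψ, .emp⟩ .skip
  | inconsistency {Sg Γ} {φ : Expr} {P : Spatial} {Q : Assn} :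
      (∀ s : Store, ¬ φ.holds s) →
      Deriv maxUnfold Sg Γ ⟨φ, P⟩ Q .error
  | substLeft {Sg Γ} {φ : Expr} {P : Spatial} {Q : Assn} {c x y} :
      PImplies φ (.eq (.var x) (.var y)) →
      Deriv maxUnfold Sg Γ (Assn.subst ⟨φ, P⟩ (Subst.single x (.var y)))
        (Q.subst (Subst.single x (.var y))) c →
      Deriv maxUnfold Sg Γ ⟨φ, P⟩ Q c
  | nullNotLVal {Sg Γ} {φ : Expr} {P : Spatial} {Q : Assn} {c x ι} {e : Expr} :
      Deriv maxUnfold Sg Γ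
        ⟨.and φ (.not (.eq (.var x) (.lit 0))), .star (.pts (.var x) ι e) P⟩ Q c →
      Deriv maxUnfold Sg Γ ⟨φ, .star (.pts (.var x) ι e) P⟩ Q c
  | starPartial {Sg Γ} {φ : Expr} {P : Spatial} {Q : Assn} {c x y} {ι ι' : ℕ} {e e' : Expr} :
      Deriv maxUnfold Sg Γ
        ⟨.and φ (.not (.eq (.add (.var x) (.lit (ι : Val))) (.add (.var y) (.lit (ι' : Val))))),
         .star (.pts (.var x) ι e) (.star (.pts (.var y) ι' e') P)⟩ Q c →
      Deriv maxUnfold Sg Γ ⟨φ, .star (.pts (.var x) ι e) (.star (.pts (.var y) ι' e') P)⟩ Q c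
  | read {Sg Γ} {φ : Expr} {P : Spatial} {Q : Assn} {c} {x a y : Var} {ι : ℕ} :
      a ∈ GV Γ ⟨φ, .star (.pts (.var x) ι (.var a)) P⟩ Q →
      y ∉ Γ → y ∉ Assn.vars ⟨φ, .star (.pts (.var x) ι (.var a)) P⟩ → y ∉ Q.vars →
      Deriv maxUnfold Sg (insert y Γ)
        (Assn.subst ⟨φ, .star (.pts (.var x) ι (.var a)) P⟩ (Subst.single a (.var y)))
        (Q.subst (Subst.single a (.var y))) c →
      Deriv maxUnfold Sg Γ ⟨φ, .star (.pts (.var x) ι (.var a)) P⟩ Q (.seq (.read y x ι) c)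
  | write {Sg Γ} {φ ψ : Expr} {P Q : Spatial} {c} {x : Var} {ι : ℕ} {e e' : Expr} :
      e.vars ⊆ Γ →
      Deriv maxUnfold Sg Γ ⟨φ, .star (.pts (.var x) ι e) P⟩ ⟨ψ, .star (.pts (.var x) ι e) Q⟩ c →
      Deriv maxUnfold Sg Γ ⟨φ, .star (.pts (.var x) ι e') P⟩ ⟨ψ, .star (.pts (.var x) ι e) Q⟩
        (.seq (.write x ι e) c)
  | frame {Sg Γ} {φ ψ : Expr} {P Q R R' : Spatial} {c} :
      EV Γ ⟨φ, P⟩ ⟨ψ, Q⟩ ∩ R.vars = ∅ →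
      R.eraseTags = R'.eraseTags →
      Deriv maxUnfold Sg Γ ⟨φ, P⟩ ⟨ψ, Q⟩ c →
      Deriv maxUnfold Sg Γ ⟨φ, .star P R⟩ ⟨ψ, .star Q R'⟩ c
  | unifyHeaps {Sg Γ} {φ ψ : Expr} {P Q R R' : Spatial} {c} {σ : Subst} :
      (R'.subst σ).eraseTags = R.eraseTags →
      σ.domain ≠ ∅ → σ.domain ⊆ ↑(EV Γ ⟨φ, .star P R⟩ ⟨ψ, .star Q R'⟩) →
      Deriv maxUnfold Sg Γ ⟨φ, .star P R⟩ (Assn.subst ⟨ψ, .star Q R'⟩ σ) c →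
      Deriv maxUnfold Sg Γ ⟨φ, .star P R⟩ ⟨ψ, .star Q R'⟩ c
  | pick {Sg Γ} {φ ψ : Expr} {P Q : Spatial} {c} {y : Var} {e : Expr} :
      y ∈ EV Γ ⟨φ, P⟩ ⟨ψ, Q⟩ →
      e.vars ⊆ Γ ∪ GV Γ ⟨φ, P⟩ ⟨ψ, Q⟩ →
      Deriv maxUnfold Sg Γ ⟨φ, P⟩ (Assn.subst ⟨ψ, Q⟩ (Subst.single y e)) c →
      Deriv maxUnfold Sg Γ ⟨φ, P⟩ ⟨ψ, Q⟩ c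
  | unifyPure {Sg Γ} {φ φ' ψ ψ' : Expr} {P Q : Spatial} {c} {σ : Subst} :
      ψ'.subst σ = φ' →
      σ.domain ≠ ∅ → σ.domain ⊆ ↑(EV Γ ⟨.and φ φ', P⟩ ⟨.and ψ ψ', Q⟩) →
      Deriv maxUnfold Sg Γ ⟨.and φ φ', P⟩ (Assn.subst ⟨.and ψ ψ', Q⟩ σ) c →
      Deriv maxUnfold Sg Γ ⟨.and φ φ', P⟩ ⟨.and ψ ψ', Q⟩ c
  | substRight {Sg Γ} {P : Assn} {ψ : Expr} {Q : Spatial} {c} {x : Var} {e : Expr} :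
      x ∈ EV Γ P ⟨.and ψ (.eq (.var x) e), Q⟩ →
      Deriv maxUnfold Sg Γ P (Assn.subst ⟨ψ, Q⟩ (Subst.single x e)) c →
      Deriv maxUnfold Sg Γ P ⟨.and ψ (.eq (.var x) e), Q⟩ c
  | alloc {Sg Γ} {φ ψ : Expr} {P Q R R' : Spatial} {z y : Var} {m : ℕ}
      {es : List Expr} {ts : List Var} {c} :
      R = .star (.blk (.var z) m) (ptsRange z es) → es.length = m →
      z ∈ EV Γ ⟨φ, P⟩ ⟨ψ, .star Q R⟩ →
      ts.length = m →
      (∀ w ∈ y :: ts, w ∉ Γ ∧ w ∉ Assn.vars ⟨φ, P⟩ ∧ w ∉ Assn.vars ⟨ψ, .star Q R⟩) →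
      R' = .star (.blk (.var y) m) (ptsRange y (ts.map .var)) →
      Deriv maxUnfold Sg (insert y Γ) ⟨φ, .star P R'⟩ ⟨ψ, .star Q R⟩ c →
      Deriv maxUnfold Sg Γ ⟨φ, P⟩ ⟨ψ, .star Q R⟩ (.seq (.malloc y m) c)
  | free {Sg Γ} {φ : Expr} {P : Spatial} {Q : Assn} {R : Spatial} {x : Var} {m : ℕ}
      {es : List Expr} {c} :
      R = .star (.blk (.var x) m) (ptsRange x es) → es.length = m →
      x ∈ Γ → (∀ e ∈ es, Expr.vars e ⊆ Γ) →
      Deriv maxUnfold Sg Γ ⟨φ, P⟩ Q c →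
      Deriv maxUnfold Sg Γ ⟨φ, .star P R⟩ Q (.seq (.free x m) c)
  | openR {Sg : Ctx} {Γ} {φ : Expr} {P : Spatial} {Q : Assn} {p : String}
      {args : List Expr} {ℓ : ℕ} {D : PredDef} {σ : Subst} {cs : List Cmd} :
      D ∈ Sg.preds → D.name = p →
      (∀ a ∈ args, Expr.vars a ⊆ Γ) →
      D.params.length = args.length →
      ℓ < maxUnfold →
      σ = Subst.ofList (D.params.zip args) →
      cs.length = D.clauses.length →
      (∀ (j : ℕ) (hj : j < D.clauses.length) (hj' : j < cs.length),
        Deriv maxUnfold Sg Γ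
          ⟨.and φ (.and ((D.clauses[j]'hj).guard.subst σ) ((D.clauses[j]'hj).pure.subst σ)),
           .star (((D.clauses[j]'hj).spat.subst σ).setTags (some (ℓ + 1))) P.eraseTags⟩
          Q (cs[j]'hj')) →
      Deriv maxUnfold Sg Γ ⟨φ, .star P (.pred p (some ℓ) args)⟩ Q
        (iteChain (D.clauses.map (fun cl => cl.guard.subst σ)) cs)
  | close {Sg : Ctx} {Γ} {P : Assn} {ψ : Expr} {Q : Spatial} {p : String}
      {args : List Expr} {ℓ : ℕ} {D : PredDef} {σ : Subst} {k : ℕ} {c}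
      (hk : k < D.clauses.length) :
      D ∈ Sg.preds → D.name = p →
      D.params.length = args.length →
      ℓ < maxUnfold →
      σ = Subst.ofList (D.params.zip args) →
      Deriv maxUnfold Sg Γ P
        ⟨.and ψ (.and ((D.clauses[k]'hk).guard.subst σ) ((D.clauses[k]'hk).pure.subst σ)),
         .star Q (((D.clauses[k]'hk).spat.subst σ).setTags (some (ℓ + 1)))⟩ c →
      Deriv maxUnfold Sg Γ P ⟨ψ, .star Q (.pred p (some ℓ) args)⟩ c
  | callR {Sg : Ctx} {Γ} {φ : Expr} {P R : Spatial} {Q : Assn} {fs : FunSpec}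
      {σ : Subst} {es : List Expr} {c} :
      fs ∈ Sg.funs →
      R = fs.pre.spat.subst σ →
      PImplies φ (fs.pre.pure.subst σ) →
      es = fs.params.map (fun x => (σ x).getD (.var x)) →
      (∀ e ∈ es, Expr.vars e ⊆ Γ) →
      Deriv maxUnfold Sg Γ
        ⟨.and φ (fs.post.pure.subst σ), .star P ((fs.post.spat.subst σ).eraseTags)⟩ Q c →
      Deriv maxUnfold Sg Γ ⟨φ, .star P R⟩ Q (.seq (.call fs.name es) c)
  | abduceCall {Sg : Ctx} {Γ} {φ : Expr} {P R : Spatial} {Q : Assn} {fs : FunSpec}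
      {σ : Subst} {Pf Ff Fh F' : Spatial} {c₁ c₂} :
      fs ∈ Sg.funs →
      fs.pre.spat = .star Pf Ff →
      ¬ Ff.hasPred → Ff ≠ .emp →
      P = Pf.subst σ → F' = Ff.subst σ →
      Deriv maxUnfold Sg Γ ⟨φ, Fh⟩ ⟨φ, F'⟩ c₁ →
      Deriv maxUnfold Sg Γ ⟨φ, .star P (.star F' R)⟩ Q c₂ →
      Deriv maxUnfold Sg Γ ⟨φ, .star P (.star Fh R)⟩ Q (.seq c₁ c₂)

/-- The top-level SSL judgment for a goal named `f` with formal parameters `xs`: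
    either the rule Induction is applied first (adding the recursive hypothesis
    to the context), or the derivation proceeds with the remaining rules. -/
inductive DerivTop (maxUnfold : ℕ) : Ctx → String → List Var → Assn → Assn → Cmd → Prop
  | induction {Sg : Ctx} {f : String} {xs : List Var} {φ : Expr} {p : String}
      {args : List Expr} {P : Spatial} {Q : Assn} {c} :
      Deriv maxUnfold
        ⟨Sg.preds,
         ⟨f, xs, ⟨φ, .star (.pred p (some 1) args) P.eraseTags⟩, Q.eraseTags⟩ :: Sg.funs⟩
        xs.toFinset ⟨φ, .star (.pred p (some 0) args) P⟩ Q c →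
      DerivTop maxUnfold Sg f xs ⟨φ, .star (.pred p (some 0) args) P⟩ Q c
  | plain {Sg : Ctx} {f : String} {xs : List Var} {P Q : Assn} {c} :
      Deriv maxUnfold Sg xs.toFinset P Q c →
      DerivTop maxUnfold Sg f xs P Q c


/-! Auxiliary lemmas for emp_sound -/

lemma skip_no_step (Δ : FunDict) (h : Heap) (s : Store) (cfg : Config) :
    ¬ Step Δ (h, [(Cmd.skip, s)]) cfg := by
  intro hst
  cases hst with
  | head hs => cases hs

lemma skip_steps_eq (Δ : FunDict) (h h' : Heap) (s s' : Store)
    (hst : Steps Δ (h, [(Cmd.skip, s)]) (h', [(Cmd.skip, s')])) :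
    h = h' ∧ s = s' := by
  rcases Relation.ReflTransGen.cases_head hst with heq | ⟨c, hstep, _⟩
  · simp only [Prod.mk.injEq, List.cons.injEq, and_true] at heq
    exact ⟨heq.1, heq.2.2⟩
  · exact absurd hstep (skip_no_step Δ h s c)

/-- evaluating a value-substituted expression equals evaluating under an
updated store -/
lemma eval_subst_store (σ : Subst) (g : Var → Val) (s s' : Store)
    (hlk : ∀ x, s'.lookup x = if (σ x).isSome then some (g x) else s.lookup x)
    (hval : ∀ x, (σ x).isSome → σ x = some (Expr.lit (g x)))
    (e : Expr) : Expr.eval (e.subst σ) s = Expr.eval e s' := by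
  induction e with
  | lit v => rfl
  | var x =>
      by_cases hx : (σ x).isSome
      · simp [Expr.subst, hval x hx, Expr.eval, hlk x, hx]
      · rw [Option.not_isSome_iff_eq_none] at hx
        simp [Expr.subst, hx, Expr.eval, hlk x]
  | add e₁ e₂ ih₁ ih₂ => simp [Expr.subst, Expr.eval, ih₁, ih₂]
  | eq e₁ e₂ ih₁ ih₂ => simp [Expr.subst, Expr.eval, ih₁, ih₂]
  | and e₁ e₂ ih₁ ih₂ => simp [Expr.subst, Expr.eval, ih₁, ih₂]
  | not e ih => simp [Expr.subst, Expr.eval, ih]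

lemma foldr_insert_lookup (g : Var → Val) (s : Store) (l : List Var) (x : Var) :
    (l.foldr (fun y acc => acc.insert y (g y)) s).lookup x
      = if x ∈ l then some (g x) else s.lookup x := by
  induction l with
  | nil => simp
  | cons a t ih =>
      by_cases hxa : x = a
      · subst hxa; simp [Finmap.lookup_insert]
      · simp [List.foldr, Finmap.lookup_insert_of_ne _ (by exact hxa), ih,
          List.mem_cons, hxa]


/-- **Soundness of the Emp rule**: if the goal has no existentials and the pure
implication φ ⇒ ψ is valid, then Σ; Γ; {φ; emp} skip {ψ; emp} is n-valid. -/
theorem emp_sound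
    (I : Interp) (n : ℕ) (Δ : FunDict) (Sg : Ctx) (Γ : Finset Var) (φ ψ : Expr)
    (hEV : EV Γ ⟨φ, .emp⟩ ⟨ψ, .emp⟩ = ∅)
    (himp : PImplies φ ψ) :
    Valid I Δ Γ ⟨φ, .emp⟩ .skip ⟨ψ, .emp⟩ n := by
  intro h h' s s' _ hsteps hkeys σgv hgv hsat
  obtain ⟨rfl, rfl⟩ := skip_steps_eq Δ h h' s s' hsteps
  -- the value function of σgv
  set g : Var → Val := fun x => match σgv x with
    | some (.lit v) => v
    | _ => 0 with hg
  have hval : ∀ x, (σgv x).isSome → σgv x = some (Expr.lit (g x)) := by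
    intro x hx
    obtain ⟨e, he⟩ := Option.isSome_iff_exists.mp hx
    obtain ⟨v, hv⟩ := hgv.2 x e he
    subst hv
    simp [hg, he]
  -- build the updated store
  set s₂ : Store := (GV Γ ⟨φ, .emp⟩ ⟨ψ, .emp⟩).toList.foldr
      (fun y acc => acc.insert y (g y)) s with hs₂
  have hlk : ∀ x, s₂.lookup x = if (σgv x).isSome then some (g x) else s.lookup x := by
    intro x
    rw [hs₂, foldr_insert_lookup]
    by_cases hx : (σgv x).isSome
    · simp [hx, (hgv.1 x).mpr hx]
    · have : x ∉ GV Γ ⟨φ, .emp⟩ ⟨ψ, .emp⟩ := fun hmem => hx ((hgv.1 x).mp hmem)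
      simp [hx, this]
  have heval := eval_subst_store σgv g s s₂ hlk hval
  obtain ⟨hpure, hspat⟩ := hsat
  have hφ : φ.holds s₂ := by
    unfold Expr.holds at hpure ⊢
    rw [← heval φ]; exact hpure
  have hψ : ψ.holds s₂ := himp s₂ hφ
  refine ⟨fun _ => none, ⟨?_, by intro x e h; cases h⟩, ?_, ?_⟩
  · intro x
    simp [hEV]
  · show Expr.holds (ψ.subst _) s
    have hun : (Subst.union (fun _ => none) σgv) = σgv := by
      funext x; simp [Subst.union, Option.orElse]
    rw [hun]
    unfold Expr.holds
    rw [heval ψ]; exact hψ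
  · exact hspat


end SSL
end

section
/- Soundness of the NullNotLVal rule: for every n ∈ ℕ and every function dictionary Δ, if the specification Σ; Γ; {φ ∧ x ≠ 0; ⟨x,ι⟩ ↦ e ∗ P} c {Q} is n-valid w.r.t. Δ, then the specification Σ; Γ; {φ; ⟨x,ι⟩ ↦ e ∗ P} c {Q} is n-valid w.r.t. Δ; this is because any heap–store pair satisfying a precondition containing the heaplet ⟨x,ι⟩ ↦ e must evaluate x to a non-null address (0 is never allocated), so it also satisfies the strengthened precondition. -/
set_option maxHeartbeats 1000000

namespace SSL

/-- **Soundness of the NullNotLVal rule**. -/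
theorem nullNotLVal_sound
    (I : Interp) (n : ℕ) (Δ : FunDict) (Sg : Ctx) (Γ : Finset Var)
    (φ : Expr) (P : Spatial) (Q : Assn) (x : Var) (ι : ℕ) (e : Expr) (c : Cmd)
    (hprem : Valid I Δ Γ
      ⟨.and φ (.not (.eq (.var x) (.lit 0))), .star (.pts (.var x) ι e) P⟩ c Q n) :
    Valid I Δ Γ ⟨φ, .star (.pts (.var x) ι e) P⟩ c Q n := by
  intro h h' s s' hsz hsteps hkeys σgv hσ hsat
  have hvars :
      (Assn.vars ⟨.and φ (.not (.eq (.var x) (.lit 0))), .star (.pts (.var x) ι e) P⟩)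
        = Assn.vars ⟨φ, .star (.pts (.var x) ι e) P⟩ := by
    simp only [Assn.vars, Expr.vars, Spatial.vars]
    ext a
    simp only [Finset.mem_union, Finset.mem_singleton, Finset.notMem_empty]
    tauto
  have hGV : GV Γ ⟨.and φ (.not (.eq (.var x) (.lit 0))), .star (.pts (.var x) ι e) P⟩ Q
      = GV Γ ⟨φ, .star (.pts (.var x) ι e) P⟩ Q := by
    simp [GV, hvars]
  have hEV : EV Γ ⟨.and φ (.not (.eq (.var x) (.lit 0))), .star (.pts (.var x) ι e) P⟩ Q
      = EV Γ ⟨φ, .star (.pts (.var x) ι e) P⟩ Q := by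
    simp [EV, hvars]
  obtain ⟨hpure, hspat⟩ := hsat
  have hspat' := hspat
  simp only [Assn.subst, Spatial.subst] at hspat'
  obtain ⟨h₁, h₂, _, _, ⟨l, v, hl, hx, _, _⟩, _⟩ := hspat'
  have hnewsat : Sat I h s
      ((⟨.and φ (.not (.eq (.var x) (.lit 0))), .star (.pts (.var x) ι e) P⟩ : Assn).subst σgv) := by
    refine ⟨?_, hspat⟩
    simp only [Assn.subst, Expr.subst] at hpure ⊢
    have hx' : (Expr.subst σgv (.var x)).eval s = some ((l : ℕ) : Val) := hx
    simp only [Expr.subst] at hx'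
    simp only [Expr.holds] at hpure ⊢
    have hlne : ((l : ℕ) : Val) ≠ (0 : Val) := by exact_mod_cast hl.ne'
    simp [Expr.eval, hx', hpure, hlne, hl.ne']
  obtain ⟨σev, h1, h2⟩ := hprem h h' s s' hsz hsteps hkeys σgv (hGV ▸ hσ) hnewsat
  exact ⟨σev, hEV ▸ h1, h2⟩

end SSL
end

section
/- Soundness of the Pick rule (auxiliary variable elimination): for every n ∈ ℕ and every function dictionary Δ, if y ∈ EV(Γ, {φ; P}, {ψ; Q}) is an existential of the goal, Vars(e) ⊆ Γ ∪ GV(Γ, {φ; P}, {ψ; Q}), and the specification Σ; Γ; {φ; P} c [e/y]{ψ; Q} is n-valid w.r.t. Δ, then the specification Σ; Γ; {φ; P} c {ψ; Q} is n-valid w.r.t. Δ. -/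
set_option maxHeartbeats 1000000

namespace SSL

/-! ### Auxiliary lemmas for the soundness of Pick -/

/-- `E₂` evaluates to whatever `E₁` evaluates to (when defined) under `s`. -/
def PickRefines (s : Store) (E₁ E₂ : Expr) : Prop :=
  ∀ w, E₁.eval s = some w → E₂.eval s = some w

def PickSubstRefines (s : Store) (σ₁ σ₂ : Subst) : Prop :=
  ∀ z, PickRefines s ((σ₁ z).getD (.var z)) ((σ₂ z).getD (.var z))

lemma Expr.subst_subst_single (y : Var) (e₀ : Expr) (τ : Subst) :
    ∀ e : Expr, (e.subst (Subst.single y e₀)).subst τ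
      = e.subst (fun z => if z = y then some (e₀.subst τ) else τ z)
  | .lit v => rfl
  | .var x => by by_cases hx : x = y <;> simp [Expr.subst, Subst.single, hx]
  | .add e₁ e₂ => by
      simp [Expr.subst, Expr.subst_subst_single y e₀ τ e₁, Expr.subst_subst_single y e₀ τ e₂]
  | .eq e₁ e₂ => by
      simp [Expr.subst, Expr.subst_subst_single y e₀ τ e₁, Expr.subst_subst_single y e₀ τ e₂]
  | .and e₁ e₂ => by
      simp [Expr.subst, Expr.subst_subst_single y e₀ τ e₁, Expr.subst_subst_single y e₀ τ e₂]
  | .not e => by simp [Expr.subst, Expr.subst_subst_single y e₀ τ e]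

lemma Spatial.subst_subst_single (y : Var) (e₀ : Expr) (τ : Subst) :
    ∀ sp : Spatial, (sp.subst (Subst.single y e₀)).subst τ
      = sp.subst (fun z => if z = y then some (e₀.subst τ) else τ z)
  | .emp => rfl
  | .pts e₁ ι e₂ => by simp [Spatial.subst, Expr.subst_subst_single]
  | .blk e m => by simp [Spatial.subst, Expr.subst_subst_single]
  | .pred p t args => by
      simp [Spatial.subst, List.map_map, Function.comp_def, Expr.subst_subst_single]
  | .star P Q => by
      simp [Spatial.subst, Spatial.subst_subst_single y e₀ τ P,
        Spatial.subst_subst_single y e₀ τ Q]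

lemma Assn.subst_subst_single (A : Assn) (y : Var) (e₀ : Expr) (τ : Subst) :
    (A.subst (Subst.single y e₀)).subst τ
      = A.subst (fun z => if z = y then some (e₀.subst τ) else τ z) := by
  simp [Assn.subst, Expr.subst_subst_single, Spatial.subst_subst_single]

lemma Expr.eval_refines (s : Store) (σ₁ σ₂ : Subst) (hσ : PickSubstRefines s σ₁ σ₂) :
    ∀ e : Expr, PickRefines s (e.subst σ₁) (e.subst σ₂) := by
  intro e
  induction e with
  | lit v => intro w hw; exact hw
  | var x => exact hσ x
  | add e₁ e₂ ih₁ ih₂ =>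
      intro w hw
      simp only [Expr.subst, Expr.eval, Option.bind_eq_bind, Option.pure_def,
        Option.bind_eq_some_iff, Option.some.injEq] at hw ⊢
      obtain ⟨v₁, h₁, v₂, h₂, rfl⟩ := hw
      exact ⟨v₁, ih₁ _ h₁, v₂, ih₂ _ h₂, rfl⟩
  | eq e₁ e₂ ih₁ ih₂ =>
      intro w hw
      simp only [Expr.subst, Expr.eval, Option.bind_eq_bind, Option.pure_def,
        Option.bind_eq_some_iff, Option.some.injEq] at hw ⊢
      obtain ⟨v₁, h₁, v₂, h₂, rfl⟩ := hw
      exact ⟨v₁, ih₁ _ h₁, v₂, ih₂ _ h₂, rfl⟩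
  | and e₁ e₂ ih₁ ih₂ =>
      intro w hw
      simp only [Expr.subst, Expr.eval, Option.bind_eq_bind, Option.pure_def,
        Option.bind_eq_some_iff, Option.some.injEq] at hw ⊢
      obtain ⟨v₁, h₁, v₂, h₂, rfl⟩ := hw
      exact ⟨v₁, ih₁ _ h₁, v₂, ih₂ _ h₂, rfl⟩
  | not e ih =>
      intro w hw
      simp only [Expr.subst, Expr.eval, Option.bind_eq_bind, Option.pure_def,
        Option.bind_eq_some_iff, Option.some.injEq] at hw ⊢
      obtain ⟨v₁, h₁, rfl⟩ := hw
      exact ⟨v₁, ih _ h₁, rfl⟩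

lemma evalList_refines (s : Store) (σ₁ σ₂ : Subst) (hσ : PickSubstRefines s σ₁ σ₂) :
    ∀ (es : List Expr) (vs : List Val),
      evalList (es.map (Expr.subst σ₁)) s = some vs →
      evalList (es.map (Expr.subst σ₂)) s = some vs := by
  intro es
  induction es with
  | nil => intro vs hvs; simpa [evalList] using hvs
  | cons a l ih =>
      intro vs hvs
      simp only [evalList, List.map_cons, List.mapM_cons, Option.bind_eq_bind,
        Option.pure_def, Option.bind_eq_some_iff, Option.some.injEq] at hvs ⊢
      obtain ⟨v, hv, ws, hws, rfl⟩ := hvs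
      exact ⟨v, Expr.eval_refines s σ₁ σ₂ hσ a _ hv, ws, ih ws hws, rfl⟩

lemma satS_refines (I : Interp) (s : Store) (σ₁ σ₂ : Subst)
    (hσ : PickSubstRefines s σ₁ σ₂) :
    ∀ (sp : Spatial) (h : Heap), SatS I h s (sp.subst σ₁) → SatS I h s (sp.subst σ₂) := by
  intro sp
  induction sp with
  | emp => exact fun h hh => hh
  | pts e₁ ι e₂ =>
      intro h hh
      obtain ⟨l, v, hl, h₁, h₂, rfl⟩ := hh
      exact ⟨l, v, hl, Expr.eval_refines s σ₁ σ₂ hσ e₁ _ h₁,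
        Expr.eval_refines s σ₁ σ₂ hσ e₂ _ h₂, rfl⟩
  | blk e m => exact fun h hh => hh
  | pred p t args =>
      intro h hh
      obtain ⟨vs, hvs, hI⟩ := hh
      exact ⟨vs, evalList_refines s σ₁ σ₂ hσ args vs hvs, hI⟩
  | star P Q ihP ihQ =>
      intro h hh
      obtain ⟨h₁, h₂, hd, rfl, hP, hQ⟩ := hh
      exact ⟨h₁, h₂, hd, rfl, ihP h₁ hP, ihQ h₂ hQ⟩

lemma sat_refines (I : Interp) (h : Heap) (s : Store) (σ₁ σ₂ : Subst)
    (hσ : PickSubstRefines s σ₁ σ₂) (A : Assn) :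
    Sat I h s (A.subst σ₁) → Sat I h s (A.subst σ₂) := by
  rintro ⟨hp, hs⟩
  exact ⟨Expr.eval_refines s σ₁ σ₂ hσ A.pure 1 hp, satS_refines I s σ₁ σ₂ hσ A.spat h hs⟩

lemma Expr.mem_vars_subst_single {y : Var} {e₀ : Expr} :
    ∀ e : Expr, ∀ z, z ∈ (e.subst (Subst.single y e₀)).vars →
      (z ∈ e.vars ∧ z ≠ y) ∨ z ∈ e₀.vars := by
  intro e
  induction e with
  | lit v => intro z hz; simp [Expr.subst, Expr.vars] at hz
  | var x =>
      intro z hz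
      by_cases hx : x = y
      · subst hx; simp [Expr.subst, Subst.single] at hz; exact Or.inr hz
      · simp [Expr.subst, Subst.single, hx, Expr.vars] at hz
        subst hz; exact Or.inl ⟨by simp [Expr.vars], hx⟩
  | add e₁ e₂ ih₁ ih₂ =>
      intro z hz
      simp only [Expr.subst, Expr.vars, Finset.mem_union] at hz ⊢
      rcases hz with hz | hz
      · rcases ih₁ z hz with ⟨h1, h2⟩ | h; exacts [Or.inl ⟨Or.inl h1, h2⟩, Or.inr h]
      · rcases ih₂ z hz with ⟨h1, h2⟩ | h; exacts [Or.inl ⟨Or.inr h1, h2⟩, Or.inr h]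
  | eq e₁ e₂ ih₁ ih₂ =>
      intro z hz
      simp only [Expr.subst, Expr.vars, Finset.mem_union] at hz ⊢
      rcases hz with hz | hz
      · rcases ih₁ z hz with ⟨h1, h2⟩ | h; exacts [Or.inl ⟨Or.inl h1, h2⟩, Or.inr h]
      · rcases ih₂ z hz with ⟨h1, h2⟩ | h; exacts [Or.inl ⟨Or.inr h1, h2⟩, Or.inr h]
  | and e₁ e₂ ih₁ ih₂ =>
      intro z hz
      simp only [Expr.subst, Expr.vars, Finset.mem_union] at hz ⊢
      rcases hz with hz | hz
      · rcases ih₁ z hz with ⟨h1, h2⟩ | h; exacts [Or.inl ⟨Or.inl h1, h2⟩, Or.inr h]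
      · rcases ih₂ z hz with ⟨h1, h2⟩ | h; exacts [Or.inl ⟨Or.inr h1, h2⟩, Or.inr h]
  | not e ih => exact ih

lemma Expr.mem_vars_subst_single_of {y : Var} {e₀ : Expr} :
    ∀ e : Expr, ∀ z, z ∈ e.vars → z ≠ y → z ∈ (e.subst (Subst.single y e₀)).vars := by
  intro e
  induction e with
  | lit v => intro z hz; simp [Expr.vars] at hz
  | var x =>
      intro z hz hzy
      simp only [Expr.vars, Finset.mem_singleton] at hz; subst hz
      simp [Expr.subst, Subst.single, hzy, Expr.vars]
  | add e₁ e₂ ih₁ ih₂ =>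
      intro z hz hzy
      simp only [Expr.vars, Finset.mem_union] at hz
      simp only [Expr.subst, Expr.vars, Finset.mem_union]
      rcases hz with hz | hz
      exacts [Or.inl (ih₁ z hz hzy), Or.inr (ih₂ z hz hzy)]
  | eq e₁ e₂ ih₁ ih₂ =>
      intro z hz hzy
      simp only [Expr.vars, Finset.mem_union] at hz
      simp only [Expr.subst, Expr.vars, Finset.mem_union]
      rcases hz with hz | hz
      exacts [Or.inl (ih₁ z hz hzy), Or.inr (ih₂ z hz hzy)]
  | and e₁ e₂ ih₁ ih₂ =>
      intro z hz hzy
      simp only [Expr.vars, Finset.mem_union] at hz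
      simp only [Expr.subst, Expr.vars, Finset.mem_union]
      rcases hz with hz | hz
      exacts [Or.inl (ih₁ z hz hzy), Or.inr (ih₂ z hz hzy)]
  | not e ih => exact ih

lemma mem_foldr_vars {z : Var} :
    ∀ l : List Expr, z ∈ l.foldr (fun e acc => e.vars ∪ acc) ∅ ↔ ∃ e ∈ l, z ∈ e.vars := by
  intro l
  induction l with
  | nil => simp
  | cons a l ih => simp [ih]

lemma Spatial.mem_vars_subst_single {y : Var} {e₀ : Expr} :
    ∀ sp : Spatial, ∀ z, z ∈ (sp.subst (Subst.single y e₀)).vars →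
      (z ∈ sp.vars ∧ z ≠ y) ∨ z ∈ e₀.vars := by
  intro sp
  induction sp with
  | emp => intro z hz; simp [Spatial.subst, Spatial.vars] at hz
  | pts e₁ ι e₂ =>
      intro z hz
      simp only [Spatial.subst, Spatial.vars, Finset.mem_union] at hz ⊢
      rcases hz with hz | hz
      · rcases Expr.mem_vars_subst_single e₁ z hz with ⟨h1, h2⟩ | h
        exacts [Or.inl ⟨Or.inl h1, h2⟩, Or.inr h]
      · rcases Expr.mem_vars_subst_single e₂ z hz with ⟨h1, h2⟩ | h
        exacts [Or.inl ⟨Or.inr h1, h2⟩, Or.inr h]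
  | blk e m =>
      intro z hz
      exact Expr.mem_vars_subst_single e z hz
  | pred p t args =>
      intro z hz
      simp only [Spatial.subst, Spatial.vars, mem_foldr_vars, List.mem_map] at hz ⊢
      obtain ⟨e', ⟨a, ha, rfl⟩, hz⟩ := hz
      rcases Expr.mem_vars_subst_single a z hz with ⟨h1, h2⟩ | h
      exacts [Or.inl ⟨⟨a, ha, h1⟩, h2⟩, Or.inr h]
  | star P Q ihP ihQ =>
      intro z hz
      simp only [Spatial.subst, Spatial.vars, Finset.mem_union] at hz ⊢
      rcases hz with hz | hz
      · rcases ihP z hz with ⟨h1, h2⟩ | h; exacts [Or.inl ⟨Or.inl h1, h2⟩, Or.inr h]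
      · rcases ihQ z hz with ⟨h1, h2⟩ | h; exacts [Or.inl ⟨Or.inr h1, h2⟩, Or.inr h]

lemma Spatial.mem_vars_subst_single_of {y : Var} {e₀ : Expr} :
    ∀ sp : Spatial, ∀ z, z ∈ sp.vars → z ≠ y →
      z ∈ (sp.subst (Subst.single y e₀)).vars := by
  intro sp
  induction sp with
  | emp => intro z hz; simp [Spatial.vars] at hz
  | pts e₁ ι e₂ =>
      intro z hz hzy
      simp only [Spatial.vars, Finset.mem_union] at hz
      simp only [Spatial.subst, Spatial.vars, Finset.mem_union]
      rcases hz with hz | hz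
      exacts [Or.inl (Expr.mem_vars_subst_single_of e₁ z hz hzy),
        Or.inr (Expr.mem_vars_subst_single_of e₂ z hz hzy)]
  | blk e m => exact fun z hz hzy => Expr.mem_vars_subst_single_of e z hz hzy
  | pred p t args =>
      intro z hz hzy
      simp only [Spatial.vars, mem_foldr_vars, List.mem_map] at hz
      simp only [Spatial.subst, Spatial.vars, mem_foldr_vars, List.mem_map]
      obtain ⟨a, ha, hz⟩ := hz
      exact ⟨a.subst (Subst.single y e₀), ⟨a, ha, rfl⟩,
        Expr.mem_vars_subst_single_of a z hz hzy⟩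
  | star P Q ihP ihQ =>
      intro z hz hzy
      simp only [Spatial.vars, Finset.mem_union] at hz
      simp only [Spatial.subst, Spatial.vars, Finset.mem_union]
      rcases hz with hz | hz
      exacts [Or.inl (ihP z hz hzy), Or.inr (ihQ z hz hzy)]



lemma Assn.mem_vars_subst_single {y : Var} {e₀ : Expr} (A : Assn) (z : Var)
    (hz : z ∈ (A.subst (Subst.single y e₀)).vars) :
    (z ∈ A.vars ∧ z ≠ y) ∨ z ∈ e₀.vars := by
  rcases Finset.mem_union.mp hz with hz | hz
  · rcases Expr.mem_vars_subst_single A.pure z hz with ⟨h1, h2⟩ | hin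
    exacts [Or.inl ⟨Finset.mem_union_left _ h1, h2⟩, Or.inr hin]
  · rcases Spatial.mem_vars_subst_single A.spat z hz with ⟨h1, h2⟩ | hin
    exacts [Or.inl ⟨Finset.mem_union_right _ h1, h2⟩, Or.inr hin]

lemma Assn.mem_vars_subst_single_of {y : Var} {e₀ : Expr} (A : Assn) (z : Var)
    (hz : z ∈ A.vars) (hzy : z ≠ y) :
    z ∈ (A.subst (Subst.single y e₀)).vars := by
  rcases Finset.mem_union.mp hz with hz | hz
  · exact Finset.mem_union_left _ (Expr.mem_vars_subst_single_of A.pure z hz hzy)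
  · exact Finset.mem_union_right _ (Spatial.mem_vars_subst_single_of A.spat z hz hzy)


/-- **Soundness of the Pick rule** (auxiliary variable elimination). -/
theorem pick_sound
    (I : Interp) (n : ℕ) (Δ : FunDict) (Sg : Ctx) (Γ : Finset Var)
    (φ ψ : Expr) (P Q : Spatial) (y : Var) (e : Expr) (c : Cmd)
    (hy : y ∈ EV Γ ⟨φ, P⟩ ⟨ψ, Q⟩)
    (he : e.vars ⊆ Γ ∪ GV Γ ⟨φ, P⟩ ⟨ψ, Q⟩)
    (hprem : Valid I Δ Γ ⟨φ, P⟩ c (Assn.subst ⟨ψ, Q⟩ (Subst.single y e)) n) :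
    Valid I Δ Γ ⟨φ, P⟩ c ⟨ψ, Q⟩ n := by
  intro h h' s s' hsize hsteps hkeys σgv hgv hpre
  obtain ⟨σev', hev', hsat⟩ := hprem h h' s s' hsize hsteps hkeys σgv hgv hpre
  -- abbreviation for the combined substitution of the premise
  set τ : Subst := Subst.union σev' σgv with hτdef
  -- basic facts about the existential y
  have hyv : y ∈ Assn.vars ⟨ψ, Q⟩ := (Finset.mem_sdiff.mp hy).1
  have hyn : y ∉ Γ ∪ Assn.vars ⟨φ, P⟩ := (Finset.mem_sdiff.mp hy).2
  have hyΓ : y ∉ Γ := fun hc => hyn (Finset.mem_union_left _ hc)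
  have hyP : y ∉ Assn.vars ⟨φ, P⟩ := fun hc => hyn (Finset.mem_union_right _ hc)
  have hye : y ∉ e.vars := by
    intro hc
    rcases Finset.mem_union.mp (he hc) with h1 | h1
    · exact hyΓ h1
    · exact hyP (Finset.mem_sdiff.mp h1).1
  -- the premise existentials are exactly the conclusion existentials minus y
  have hEVpc : ∀ x, x ∈ EV Γ ⟨φ, P⟩ (Assn.subst ⟨ψ, Q⟩ (Subst.single y e)) ↔
      (x ∈ EV Γ ⟨φ, P⟩ ⟨ψ, Q⟩ ∧ x ≠ y) := by
    intro x
    constructor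
    · intro hx
      obtain ⟨hxv, hxn⟩ := Finset.mem_sdiff.mp hx
      rcases Assn.mem_vars_subst_single _ x hxv with ⟨h1, h2⟩ | hin
      · exact ⟨Finset.mem_sdiff.mpr ⟨h1, hxn⟩, h2⟩
      · exfalso
        rcases Finset.mem_union.mp (he hin) with h1 | h1
        · exact hxn (Finset.mem_union_left _ h1)
        · exact hxn (Finset.mem_union_right _ (Finset.mem_sdiff.mp h1).1)
    · rintro ⟨hx, hxy⟩
      obtain ⟨hxv, hxn⟩ := Finset.mem_sdiff.mp hx
      exact Finset.mem_sdiff.mpr ⟨Assn.mem_vars_subst_single_of _ x hxv hxy, hxn⟩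
  have hyEVp : y ∉ EV Γ ⟨φ, P⟩ (Assn.subst ⟨ψ, Q⟩ (Subst.single y e)) := by
    intro hc
    exact ((hEVpc y).mp hc).2 rfl
  have hσev'y : σev' y = none := by
    cases hEE : σev' y with
    | none => rfl
    | some E => exact absurd ((hev'.1 y).mpr (by simp [hEE])) hyEVp
  have hσgvy : σgv y = none := by
    cases hEE : σgv y with
    | none => rfl
    | some E =>
      have : y ∈ GV Γ (⟨φ, P⟩ : Assn) (⟨ψ, Q⟩ : Assn) := (hgv.1 y).mpr (by simp [hEE])
      exact absurd (Finset.mem_sdiff.mp this).1 hyP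
  have hτy : τ y = none := by simp [hτdef, Subst.union, hσev'y, hσgvy]
  -- the witness value for y
  obtain ⟨v, hvspec⟩ : ∃ v : Val, ∀ w, (e.subst τ).eval s' = some w → v = w :=
    ⟨((e.subst τ).eval s').getD 0, fun w hw => by rw [hw]; rfl⟩
  set σev : Subst := Subst.union σev' (Subst.single y (.lit v)) with hσevdef
  have hσevy : σev y = some (.lit v) := by
    simp [hσevdef, Subst.union, Subst.single, hσev'y]
  have hσevz : ∀ z, z ≠ y → σev z = σev' z := by
    intro z hz
    cases hc : σev' z <;> simp [hσevdef, Subst.union, Subst.single, hz, hc]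
  refine ⟨σev, ⟨?_, ?_⟩, ?_⟩
  · intro x
    by_cases hx : x = y
    · subst hx
      simp only [hσevy, Option.isSome_some, iff_true]
      exact hy
    · rw [hσevz x hx]
      rw [show (x ∈ EV Γ ⟨φ, P⟩ ⟨ψ, Q⟩) ↔
          x ∈ EV Γ ⟨φ, P⟩ (Assn.subst ⟨ψ, Q⟩ (Subst.single y e)) by
        rw [hEVpc x]; exact (and_iff_left hx).symm]
      exact hev'.1 x
  · intro x E hE
    by_cases hx : x = y
    · subst hx
      rw [hσevy] at hE
      exact ⟨v, (Option.some.injEq _ _ ▸ hE).symm⟩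
    · exact hev'.2 x E (by rw [← hσevz x hx]; exact hE)
  · rw [Assn.subst_subst_single] at hsat
    refine sat_refines I h' s' _ _ ?_ _ hsat
    intro z
    by_cases hz : z = y
    · intro w hw
      simp only [if_pos hz, Option.getD_some] at hw
      have hvw : v = w := hvspec w hw
      have h2 : Subst.union σev σgv z = some (Expr.lit v) := by
        rw [hz]; simp [Subst.union, hσevy]
      rw [h2]
      simp [Expr.eval, hvw]
    · have h1 : Subst.union σev σgv z = τ z := by
        cases hc : σev' z <;>
          simp [hτdef, Subst.union, hσevz z hz, hc]
      intro w hw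
      simp only [if_neg hz] at hw
      rw [h1]
      exact hw

end SSL
end

section
/- Soundness of the UnifyHeaps rule: for every n ∈ ℕ and every function dictionary Δ, if σ is a substitution with ∅ ≠ dom(σ) ⊆ EV(Γ, {φ; P ∗ R}, {ψ; Q ∗ R'}) such that [σ]R' = R, and the specification Σ; Γ; {φ; P ∗ R} c [σ]{ψ; Q ∗ R'} is n-valid w.r.t. Δ, then the specification Σ; Γ; {φ; P ∗ R} c {ψ; Q ∗ R'} is n-valid w.r.t. Δ. -/
set_option maxHeartbeats 1000000

namespace SSL

/-! ## Auxiliary lemmas for UnifyHeaps soundness -/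

def Subst.comp (σ τ : Subst) : Subst := fun x =>
  match σ x with
  | some e => some (e.subst τ)
  | none => τ x

theorem Expr.subst_subst (σ τ : Subst) (e : Expr) :
    (e.subst σ).subst τ = e.subst (σ.comp τ) := by
  induction e with
  | lit v => rfl
  | var x =>
    simp only [Expr.subst, Subst.comp]
    cases σ x <;> rfl
  | add a b iha ihb => simp [Expr.subst, iha, ihb]
  | eq a b iha ihb => simp [Expr.subst, iha, ihb]
  | and a b iha ihb => simp [Expr.subst, iha, ihb]
  | not a iha => simp [Expr.subst, iha]

theorem Spatial.subst_subst (σ τ : Subst) (A : Spatial) :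
    (A.subst σ).subst τ = A.subst (σ.comp τ) := by
  induction A with
  | emp => rfl
  | pts e₁ ι e₂ => simp [Spatial.subst, Expr.subst_subst]
  | blk e m => simp [Spatial.subst, Expr.subst_subst]
  | pred p t args => simp [Spatial.subst, List.map_map, Function.comp, Expr.subst_subst]
  | star A B ihA ihB => simp [Spatial.subst, ihA, ihB]

/-- Evaluation monotonicity under pointwise agreement of substitutions. -/
theorem Expr.eval_subst_mono (ρ ρ' : Subst) (s : Store) (e : Expr)
    (hx : ∀ x ∈ e.vars, ∀ w : Val, ((ρ x).getD (.var x)).eval s = some w →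
            ((ρ' x).getD (.var x)).eval s = some w) :
    ∀ w : Val, (e.subst ρ).eval s = some w → (e.subst ρ').eval s = some w := by
  induction e with
  | lit v => intro w hw; exact hw
  | var x =>
    intro w hw
    exact hx x (by simp [Expr.vars]) w hw
  | add a b iha ihb =>
    intro w hw
    have hxa : ∀ x ∈ a.vars, ∀ w : Val, ((ρ x).getD (.var x)).eval s = some w →
        ((ρ' x).getD (.var x)).eval s = some w := fun x hxv => hx x (by simp [Expr.vars, hxv])
    have hxb : ∀ x ∈ b.vars, ∀ w : Val, ((ρ x).getD (.var x)).eval s = some w →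
        ((ρ' x).getD (.var x)).eval s = some w := fun x hxv => hx x (by simp [Expr.vars, hxv])
    simp only [Expr.subst, Expr.eval, Option.bind_eq_some_iff, Option.pure_def,
      Option.some.injEq, bind, Option.bind_eq_some_iff] at hw ⊢
    obtain ⟨w₁, hw₁, w₂, hw₂, hww⟩ := hw
    exact ⟨w₁, iha hxa w₁ hw₁, w₂, ihb hxb w₂ hw₂, hww⟩
  | eq a b iha ihb =>
    intro w hw
    have hxa : ∀ x ∈ a.vars, ∀ w : Val, ((ρ x).getD (.var x)).eval s = some w →
        ((ρ' x).getD (.var x)).eval s = some w := fun x hxv => hx x (by simp [Expr.vars, hxv])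
    have hxb : ∀ x ∈ b.vars, ∀ w : Val, ((ρ x).getD (.var x)).eval s = some w →
        ((ρ' x).getD (.var x)).eval s = some w := fun x hxv => hx x (by simp [Expr.vars, hxv])
    simp only [Expr.subst, Expr.eval, Option.bind_eq_some_iff, Option.pure_def,
      Option.some.injEq, bind, Option.bind_eq_some_iff] at hw ⊢
    obtain ⟨w₁, hw₁, w₂, hw₂, hww⟩ := hw
    exact ⟨w₁, iha hxa w₁ hw₁, w₂, ihb hxb w₂ hw₂, hww⟩
  | and a b iha ihb =>
    intro w hw
    have hxa : ∀ x ∈ a.vars, ∀ w : Val, ((ρ x).getD (.var x)).eval s = some w →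
        ((ρ' x).getD (.var x)).eval s = some w := fun x hxv => hx x (by simp [Expr.vars, hxv])
    have hxb : ∀ x ∈ b.vars, ∀ w : Val, ((ρ x).getD (.var x)).eval s = some w →
        ((ρ' x).getD (.var x)).eval s = some w := fun x hxv => hx x (by simp [Expr.vars, hxv])
    simp only [Expr.subst, Expr.eval, Option.bind_eq_some_iff, Option.pure_def,
      Option.some.injEq, bind, Option.bind_eq_some_iff] at hw ⊢
    obtain ⟨w₁, hw₁, w₂, hw₂, hww⟩ := hw
    exact ⟨w₁, iha hxa w₁ hw₁, w₂, ihb hxb w₂ hw₂, hww⟩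
  | not a iha =>
    intro w hw
    have hxa : ∀ x ∈ a.vars, ∀ w : Val, ((ρ x).getD (.var x)).eval s = some w →
        ((ρ' x).getD (.var x)).eval s = some w := fun x hxv => hx x (by simp [Expr.vars, hxv])
    simp only [Expr.subst, Expr.eval, Option.bind_eq_some_iff, Option.pure_def,
      Option.some.injEq, bind, Option.bind_eq_some_iff] at hw ⊢
    obtain ⟨w₁, hw₁, hww⟩ := hw
    exact ⟨w₁, iha hxa w₁ hw₁, hww⟩

theorem evalList_subst_mono (ρ ρ' : Subst) (s : Store) (es : List Expr)
    (hx : ∀ x, (∃ e ∈ es, x ∈ e.vars) → ∀ w : Val, ((ρ x).getD (.var x)).eval s = some w →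
            ((ρ' x).getD (.var x)).eval s = some w) :
    ∀ vs, evalList (es.map (Expr.subst ρ)) s = some vs →
      evalList (es.map (Expr.subst ρ')) s = some vs := by
  induction es with
  | nil => intro vs h; exact h
  | cons e es ih =>
    intro vs h
    simp only [List.map_cons, evalList, List.mapM_cons, Option.bind_eq_some_iff,
      Option.pure_def, Option.some.injEq, bind] at h ⊢
    obtain ⟨v, hv, ws, hws, hvs⟩ := h
    refine ⟨v, Expr.eval_subst_mono ρ ρ' s e (fun x hxv => hx x ⟨e, by simp, hxv⟩) v hv,
      ws, ?_, hvs⟩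
    exact ih (fun x ⟨e', he', hxv⟩ => hx x ⟨e', by simp [he'], hxv⟩) ws hws

theorem mem_foldr_vars_s12 {x : Var} {e : Expr} {p : String} {t : Option ℕ} :
    ∀ args : List Expr, e ∈ args → x ∈ e.vars →
      x ∈ (Spatial.pred p t args).vars := by
  intro args
  simp only [Spatial.vars]
  induction args with
  | nil => simp
  | cons a as iha =>
    intro he hxv
    simp only [List.foldr_cons, Finset.mem_union]
    rcases List.mem_cons.mp he with rfl | h'
    · exact Or.inl hxv
    · exact Or.inr (iha h' hxv)

theorem SatS_subst_mono (I : Interp) (h : Heap) (s : Store) (A : Spatial) (ρ ρ' : Subst)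
    (hx : ∀ x ∈ A.vars, ∀ w : Val, ((ρ x).getD (.var x)).eval s = some w →
            ((ρ' x).getD (.var x)).eval s = some w)
    (hsat : SatS I h s (A.subst ρ)) : SatS I h s (A.subst ρ') := by
  induction A generalizing h with
  | emp => exact hsat
  | pts e₁ ι e₂ =>
    obtain ⟨l, v, hl, h₁, h₂, hh⟩ := hsat
    exact ⟨l, v, hl,
      Expr.eval_subst_mono ρ ρ' s e₁ (fun x hxv => hx x (by simp [Spatial.vars, hxv])) _ h₁,
      Expr.eval_subst_mono ρ ρ' s e₂ (fun x hxv => hx x (by simp [Spatial.vars, hxv])) _ h₂, hh⟩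
  | blk e m => exact hsat
  | pred p t args =>
    obtain ⟨vs, hvs, hI⟩ := hsat
    refine ⟨vs, evalList_subst_mono ρ ρ' s args (fun x hxe => hx x ?_) vs hvs, hI⟩
    obtain ⟨e, he, hxv⟩ := hxe
    exact mem_foldr_vars_s12 args he hxv
  | star A B ihA ihB =>
    obtain ⟨h₁, h₂, hd, hh, hA, hB⟩ := hsat
    exact ⟨h₁, h₂, hd, hh,
      ihA h₁ (fun x hxv => hx x (by simp [Spatial.vars, hxv])) hA,
      ihB h₂ (fun x hxv => hx x (by simp [Spatial.vars, hxv])) hB⟩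
/-- **Soundness of the UnifyHeaps rule**. -/
theorem unifyHeaps_sound
    (I : Interp) (n : ℕ) (Δ : FunDict) (Sg : Ctx) (Γ : Finset Var)
    (φ ψ : Expr) (P Q R R' : Spatial) (σ : Subst) (c : Cmd)
    (hunif : R'.subst σ = R)
    (hdom₁ : σ.domain ≠ ∅)
    (hdom₂ : σ.domain ⊆ ↑(EV Γ ⟨φ, .star P R⟩ ⟨ψ, .star Q R'⟩))
    (hprem : Valid I Δ Γ ⟨φ, .star P R⟩ c (Assn.subst ⟨ψ, .star Q R'⟩ σ) n) :
    Valid I Δ Γ ⟨φ, .star P R⟩ c ⟨ψ, .star Q R'⟩ n := by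
  intro h h' s s' hsize hsteps hkeys σgv hgv hsat
  obtain ⟨σev', hev', hsat'⟩ := hprem h h' s s' hsize hsteps hkeys σgv hgv hsat
  classical
  set pre : Assn := ⟨φ, .star P R⟩ with hpre
  set post : Assn := ⟨ψ, .star Q R'⟩ with hpost
  set τ : Subst := Subst.union σev' σgv with hτ
  set ρ : Subst := Subst.comp σ τ with hρ
  set σev : Subst := fun x =>
    if x ∈ EV Γ pre post then
      some (.lit (((((ρ x).getD (.var x)).eval s')).getD 0))
    else none with hσev
  have hkey : ∀ x ∈ post.vars, ∀ w : Val, ((ρ x).getD (.var x)).eval s' = some w →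
      (((Subst.union σev σgv) x).getD (.var x)).eval s' = some w := by
    intro x hxv w hw
    by_cases hEV : x ∈ EV Γ pre post
    · have : σev x = some (.lit w) := by
        simp [hσev, hEV, hw]
      simp [Subst.union, this, Expr.eval]
    · have hσevx : σev x = none := by simp [hσev, hEV]
      have hσx : σ x = none := by
        cases hσx : σ x with
        | none => rfl
        | some e =>
          exact absurd (hdom₂ (by simp [Subst.domain, hσx])) hEV
      have hxΓ : x ∈ Γ ∪ pre.vars := by
        by_contra hc
        exact hEV (Finset.mem_sdiff.mpr ⟨hxv, hc⟩)
      have hσev'x : σev' x = none := by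
        cases hc : σev' x with
        | none => rfl
        | some e =>
          have : x ∈ EV Γ pre (post.subst σ) := (hev'.1 x).mpr (by simp [hc])
          exact absurd (Finset.mem_sdiff.mp this).2 (not_not.mpr hxΓ)
      have : ρ x = σgv x := by
        simp [hρ, Subst.comp, hσx, hτ, Subst.union, hσev'x]
      rw [this] at hw
      simpa [Subst.union, hσevx] using hw
  refine ⟨σev, ⟨fun x => ?_, fun x e he => ?_⟩, ?_, ?_⟩
  · constructor
    · intro hxEV; simp [hσev, hxEV]
    · intro hsome
      by_contra hc
      simp [hσev, hc] at hsome
  · by_cases hEV : x ∈ EV Γ pre post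
    · simp only [hσev, if_pos hEV, Option.some.injEq] at he
      exact ⟨_, he.symm⟩
    · simp [hσev, hEV] at he
  · -- pure part
    have hpureSat := hsat'.1
    have : ((ψ.subst σ).subst τ) = ψ.subst ρ := Expr.subst_subst σ τ ψ
    rw [show (Assn.subst (Assn.subst post σ) τ).pure = (ψ.subst σ).subst τ from rfl, this] at hpureSat
    exact Expr.eval_subst_mono ρ (Subst.union σev σgv) s' ψ
      (fun x hxv => hkey x (by simp [hpost, Assn.vars, Expr.vars, hxv])) 1 hpureSat
  · -- spatial part
    have hspatSat := hsat'.2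
    have : (((Spatial.star Q R').subst σ).subst τ) = (Spatial.star Q R').subst ρ :=
      Spatial.subst_subst σ τ _
    rw [show (Assn.subst (Assn.subst post σ) τ).spat = ((Spatial.star Q R').subst σ).subst τ
      from rfl, this] at hspatSat
    exact SatS_subst_mono I h' s' (Spatial.star Q R') ρ (Subst.union σev σgv)
      (fun x hxv => hkey x (by simp [hpost, Assn.vars, hxv])) hspatSat

end SSL
end
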